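/- For every n ≥ 1, there is a bijection between the set of ordered set partitions of {1,…,n} and the set of standard composite set partitions of {1,…,n}; in particular these two finite sets have the same cardinality. -/

import Mathlib

open scoped Pointwise Classical

namespace PlatesPaper

/-- The union of a list of finite sets. -/
def lUnion {n : ℕ} (L : List (Finset (Fin n))) : Finset (Fin n) :=
  L.foldr (· ∪ ·) ∅

/-- `L` is an ordered set partition of `J`: a list of pairwise disjoint nonempty
finite sets whose union is `J`. -/
def IsOSP {n : ℕ} (J : Finset (Fin n)) (L : List (Finset (Fin n))) : Prop :=
  (∀ B ∈ L, B.Nonempty) ∧ L.Pairwise Disjoint ∧ lUnion L = J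

/-- The plate of an ordered set partition `L` (of a subset `J = lUnion L` of `{1,…,n}`):
the set of `x ∈ V₀ⁿ` vanishing outside `J`, with `x_J = 0`, and such that the partial
sums over the unions of the first `i` blocks are nonnegative for `i = 1,…,len(L)−1`.
(For an ordered set partition of the whole of `{1,…,n}` the first two conditions are
equivalent to `x ∈ V₀ⁿ`.) -/
def plate {n : ℕ} (L : List (Finset (Fin n))) : Set (Fin n → ℝ) :=
  {x | (∑ i, x i = 0) ∧ (∀ j, j ∉ lUnion L → x j = 0) ∧ (∑ j ∈ lUnion L, x j = 0) ∧
    ∀ i : ℕ, 0 < i → i < L.length → 0 ≤ ∑ j ∈ lUnion (L.take i), x j}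

/-- `ℚ`-valued indicator function of a set of points of `ℝⁿ`. -/
noncomputable def ind {n : ℕ} (S : Set (Fin n → ℝ)) : (Fin n → ℝ) → ℚ :=
  fun x => if x ∈ S then 1 else 0

/-- The index of the block of `L` containing the element `a`. -/
def blockIdx {n : ℕ} (L : List (Finset (Fin n))) (a : Fin n) : ℕ :=
  L.findIdx fun B => decide (a ∈ B)

/-- The index of the block of `L` containing the set `B`. -/
def subIdx {n : ℕ} (L : List (Finset (Fin n))) (B : Finset (Fin n)) : ℕ :=
  L.findIdx fun C => decide (B ⊆ C)

/-- `B` is contained in one of the blocks of `L`. -/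
def memBlock {n : ℕ} (L : List (Finset (Fin n))) (B : Finset (Fin n)) : Prop :=
  ∃ j < L.length, B ⊆ L.getD j ∅

/-- `F` is a standard composite set partition of `{1,…,n}`: an (unordered, finite)
collection of ordered set partitions of pairwise disjoint nonempty subsets of `{1,…,n}`
whose union is `{1,…,n}`, such that the first block of each member contains the minimum
of its underlying set. -/
def IsStdCSP (n : ℕ) (F : Finset (List (Finset (Fin n)))) : Prop :=
  (∀ M ∈ F, IsOSP (lUnion M) M ∧ M ≠ []) ∧
  ((F : Set (List (Finset (Fin n)))).Pairwise fun M M' => Disjoint (lUnion M) (lUnion M')) ∧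
  F.sup lUnion = Finset.univ ∧
  (∀ M ∈ F, ∃ b ∈ M.headD ∅, ∀ a ∈ lUnion M, b ≤ a)

section Aux
variable {n : ℕ}
theorem lUnion_nil : lUnion ([] : List (Finset (Fin n))) = ∅ := rfl
theorem lUnion_cons (B : Finset (Fin n)) (T : List (Finset (Fin n))) :
    lUnion (B :: T) = B ∪ lUnion T := rfl
theorem lUnion_append (L₁ L₂ : List (Finset (Fin n))) :
    lUnion (L₁ ++ L₂) = lUnion L₁ ∪ lUnion L₂ := by
  induction L₁ with
  | nil => simp [lUnion_nil, lUnion]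
  | cons B T ih => simp [lUnion_cons, ih, Finset.union_assoc]
theorem mem_lUnion {a : Fin n} {L : List (Finset (Fin n))} :
    a ∈ lUnion L ↔ ∃ B ∈ L, a ∈ B := by
  induction L with
  | nil => simp [lUnion_nil]
  | cons B T ih => simp [lUnion_cons, ih, Finset.mem_union]
theorem subset_lUnion {B : Finset (Fin n)} {L : List (Finset (Fin n))} (h : B ∈ L) :
    B ⊆ lUnion L := fun a ha => mem_lUnion.mpr ⟨B, h, ha⟩
def key (C : List (Finset (Fin n))) : WithTop (Fin n) := (lUnion C).min
theorem min_le_min_of_subset {s t : Finset (Fin n)} (h : s ⊆ t) : t.min ≤ s.min :=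
  Finset.le_min fun a ha => Finset.min_le (h ha)
def comps : List (Finset (Fin n)) → List (List (Finset (Fin n)))
  | [] => []
  | B :: T =>
      (B :: ((comps T).takeWhile fun C => decide (B.min ≤ key C)).flatten) ::
        (comps T).dropWhile fun C => decide (B.min ≤ key C)
theorem flatten_comps : ∀ L : List (Finset (Fin n)), (comps L).flatten = L
  | [] => rfl
  | B :: T => by
    show (B :: _) ++ _ = _
    rw [List.cons_append, ← List.flatten_append, List.takeWhile_append_dropWhile,
      flatten_comps T]
theorem mem_of_mem_comps {L : List (Finset (Fin n))} {C : List (Finset (Fin n))}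
    {B : Finset (Fin n)} (hC : C ∈ comps L) (hB : B ∈ C) : B ∈ L := by
  rw [← flatten_comps L]; exact List.mem_flatten_of_mem hC hB

-- new part
theorem mem_takeWhile {α : Type*} (p : α → Bool) :
    ∀ l : List α, ∀ x ∈ l.takeWhile p, p x = true := by
  intro l
  induction l with
  | nil => simp
  | cons a l ih =>
    intro x hx
    rw [List.takeWhile_cons] at hx
    by_cases h : p a = true
    · rw [if_pos h] at hx
      rcases List.mem_cons.mp hx with rfl | hx
      · exact h
      · exact ih x hx
    · rw [if_neg h] at hx; cases hx

theorem dropWhile_key_lt (b : WithTop (Fin n)) :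
    ∀ Cs : List (List (Finset (Fin n))), Cs.Pairwise (fun C D => key D < key C) →
      ∀ D ∈ Cs.dropWhile (fun C => decide (b ≤ key C)), key D < b := by
  intro Cs
  induction Cs with
  | nil => simp
  | cons C Cs ih =>
    intro hp D hD
    rw [List.dropWhile_cons] at hD
    rcases le_or_gt b (key C) with h | h
    · rw [if_pos (by simpa using h)] at hD
      exact ih (List.pairwise_cons.mp hp).2 D hD
    · rw [if_neg (by simpa using not_le.mpr h)] at hD
      rcases List.mem_cons.mp hD with rfl | hD
      · exact h
      · exact lt_trans ((List.pairwise_cons.mp hp).1 D hD) h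

/-- Main invariant of `comps`. -/
theorem comps_spec : ∀ L : List (Finset (Fin n)), (∀ B ∈ L, B.Nonempty) →
    (∀ C ∈ comps L, C ≠ [] ∧ (∀ B ∈ C, B.Nonempty) ∧ key C = (C.headD ∅).min) ∧
    (comps L).Pairwise (fun C D => key D < key C)
  | [] => by intro _; constructor <;> simp [comps]
  | B :: T => by
    intro hB
    have hBne : B.Nonempty := hB B List.mem_cons_self
    obtain ⟨hGood, hPair⟩ := comps_spec T (fun B' h => hB B' (List.mem_cons_of_mem _ h))
    set p : List (Finset (Fin n)) → Bool := fun C => decide (B.min ≤ key C) with hp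
    set X := (comps T).takeWhile p with hX
    set Y := (comps T).dropWhile p with hY
    have hXsub : ∀ C ∈ X, C ∈ comps T := fun C hC => (List.takeWhile_sublist p).subset hC
    have hYsub : ∀ C ∈ Y, C ∈ comps T := fun C hC => (List.dropWhile_sublist p).subset hC
    have hXkey : ∀ C ∈ X, B.min ≤ key C := by
      intro C hC
      have := mem_takeWhile p (comps T) C hC
      simpa [hp] using this
    have hcomps : comps (B :: T) = (B :: X.flatten) :: Y := rfl
    have hkeyC : key (B :: X.flatten) = B.min := by
      apply le_antisymm
      · exact min_le_min_of_subset (by rw [lUnion_cons]; exact Finset.subset_union_left)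
      · apply Finset.le_min
        intro a ha
        rw [lUnion_cons, Finset.mem_union] at ha
        rcases ha with ha | ha
        · exact Finset.min_le ha
        · obtain ⟨B', hB', haB'⟩ := mem_lUnion.mp ha
          obtain ⟨C, hCX, hB'C⟩ := List.mem_flatten.mp hB'
          calc (B.min : WithTop (Fin n)) ≤ key C := hXkey C hCX
          _ ≤ ↑a := Finset.min_le (subset_lUnion hB'C haB')
    constructor
    · intro C hC
      rw [hcomps, List.mem_cons] at hC
      rcases hC with rfl | hC
      · refine ⟨by simp, ?_, by simpa using hkeyC⟩
        intro B' hB'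
        rcases List.mem_cons.mp hB' with rfl | hB'
        · exact hBne
        · obtain ⟨C, hCX, hB'C⟩ := List.mem_flatten.mp hB'
          exact (hGood C (hXsub C hCX)).2.1 B' hB'C
      · exact hGood C (hYsub C hC)
    · rw [hcomps, List.pairwise_cons]
      refine ⟨?_, List.Pairwise.sublist (List.dropWhile_sublist p) hPair⟩
      intro D hD
      rw [hkeyC]
      exact dropWhile_key_lt B.min (comps T) hPair D hD
theorem takeWhile_all {α : Type*} (p : α → Bool) :
    ∀ l : List α, (∀ x ∈ l, p x = true) → l.takeWhile p = l ∧ l.dropWhile p = [] := by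
  intro l
  induction l with
  | nil => simp
  | cons a l ih =>
    intro h
    have ha := h a List.mem_cons_self
    have := ih (fun x hx => h x (List.mem_cons_of_mem _ hx))
    rw [List.takeWhile_cons, List.dropWhile_cons, if_pos ha, if_pos ha]
    simp [this.1, this.2]

/-- A standard component is a single component. -/
theorem comps_std (M : List (Finset (Fin n))) (hM : M ≠ [])
    (hB : ∀ B ∈ M, B.Nonempty)
    (hstd : ∃ b ∈ M.headD ∅, ∀ a ∈ lUnion M, b ≤ a) : comps M = [M] := by
  obtain ⟨B, T, rfl⟩ : ∃ B T, M = B :: T := by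
    cases M with
    | nil => exact absurd rfl hM
    | cons B T => exact ⟨B, T, rfl⟩
  obtain ⟨b, hb, hble⟩ := hstd
  have hb' : b ∈ B := by simpa using hb
  have hall : ∀ C ∈ comps T, (fun C => decide ((B.min : WithTop (Fin n)) ≤ key C)) C = true := by
    intro C hC
    simp only [decide_eq_true_eq]
    apply Finset.le_min
    intro a ha
    obtain ⟨B', hB', haB'⟩ := mem_lUnion.mp ha
    have haM : a ∈ lUnion (B :: T) :=
      subset_lUnion (List.mem_cons_of_mem _ (mem_of_mem_comps hC hB')) haB'
    calc (B.min : WithTop (Fin n)) ≤ ↑b := Finset.min_le hb'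
    _ ≤ ↑a := WithTop.coe_le_coe.mpr (hble a haM)
  obtain ⟨ht, hd⟩ := takeWhile_all _ (comps T) hall
  show (B :: _) :: _ = [B :: T]
  rw [ht, hd, flatten_comps T]

theorem takeWhile_append_none {α : Type*} (p : α → Bool) (Y : List α)
    (hY : ∀ x ∈ Y, p x = false) :
    ∀ X : List α, (X ++ Y).takeWhile p = X.takeWhile p ∧
      (X ++ Y).dropWhile p = X.dropWhile p ++ Y := by
  intro X
  induction X with
  | nil =>
    simp only [List.nil_append, List.takeWhile_nil, List.dropWhile_nil]
    cases Y with
    | nil => simp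
    | cons y Y =>
      have := hY y List.mem_cons_self
      rw [List.takeWhile_cons, List.dropWhile_cons, if_neg (by simp [this]),
        if_neg (by simp [this])]
      exact ⟨rfl, rfl⟩
  | cons x X ih =>
    rw [List.cons_append, List.takeWhile_cons, List.takeWhile_cons,
      List.dropWhile_cons, List.dropWhile_cons]
    by_cases h : p x = true
    · rw [if_pos h, if_pos h, if_pos h, if_pos h, ih.1, ih.2]
      exact ⟨rfl, rfl⟩
    · rw [if_neg h, if_neg h, if_neg h, if_neg h]
      simp
theorem comps_append (M L : List (Finset (Fin n)))
    (h : ∀ C ∈ comps L, key C < (lUnion M).min) :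
    comps (M ++ L) = comps M ++ comps L := by
  induction M with
  | nil => simp [comps]
  | cons B M' ih =>
    have h' : ∀ C ∈ comps L, key C < (lUnion M').min := fun C hC =>
      lt_of_lt_of_le (h C hC)
        (min_le_min_of_subset (by rw [lUnion_cons]; exact Finset.subset_union_right))
    have hfalse : ∀ C ∈ comps L,
        (fun C => decide ((B.min : WithTop (Fin n)) ≤ key C)) C = false := by
      intro C hC
      simp only [decide_eq_false_iff_not, not_le]
      exact lt_of_lt_of_le (h C hC)
        (min_le_min_of_subset (by rw [lUnion_cons]; exact Finset.subset_union_left))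
    obtain ⟨ht, hd⟩ := takeWhile_append_none _ (comps L) hfalse (comps M')
    show (B :: _) :: _ = ((B :: _) :: _) ++ comps L
    rw [List.cons_append]
    show (B :: ((comps (M' ++ L)).takeWhile _).flatten) :: ((comps (M' ++ L)).dropWhile _)
      = (B :: ((comps M').takeWhile _).flatten) :: (((comps M').dropWhile _) ++ comps L)
    rw [ih h', ht, hd]
theorem lUnion_nonempty {C : List (Finset (Fin n))} (h : C ≠ [])
    (hB : ∀ B ∈ C, B.Nonempty) : (lUnion C).Nonempty := by
  cases C with
  | nil => exact absurd rfl h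
  | cons B T =>
    obtain ⟨a, ha⟩ := hB B List.mem_cons_self
    exact ⟨a, mem_lUnion.mpr ⟨B, List.mem_cons_self, ha⟩⟩

theorem sup_toFinset (Ls : List (List (Finset (Fin n)))) :
    Ls.toFinset.sup lUnion = lUnion Ls.flatten := by
  induction Ls with
  | nil => simp [lUnion_nil]
  | cons C Ls ih =>
    simp only [List.toFinset_cons, Finset.sup_insert, ih, List.flatten_cons, lUnion_append]
    rfl

theorem std_of_good {M : List (Finset (Fin n))} (hne : M ≠ [])
    (hB : ∀ B ∈ M, B.Nonempty) (hkey : key M = (M.headD ∅).min) :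
    ∃ b ∈ M.headD ∅, ∀ a ∈ lUnion M, b ≤ a := by
  obtain ⟨B, T, rfl⟩ : ∃ B T, M = B :: T := by
    cases M with
    | nil => exact absurd rfl hne
    | cons B T => exact ⟨B, T, rfl⟩
  have hBne : B.Nonempty := hB B List.mem_cons_self
  refine ⟨B.min' hBne, by simpa using B.min'_mem hBne, ?_⟩
  intro a ha
  have h1 : (↑(B.min' hBne) : WithTop (Fin n)) = B.min := Finset.coe_min' hBne
  have h2 : (↑(B.min' hBne) : WithTop (Fin n)) ≤ ↑a := by
    rw [h1]
    have : key (B :: T) ≤ (↑a : WithTop (Fin n)) := Finset.min_le ha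
    rw [hkey] at this
    simpa using this
  exact_mod_cast h2

/-- Well-definedness: the components of an OSP of `univ` form a standard CSP. -/
theorem comps_isStdCSP (L : List (Finset (Fin n))) (hL : IsOSP Finset.univ L) :
    IsStdCSP n (comps L).toFinset := by
  obtain ⟨hne, hdisj, hU⟩ := hL
  obtain ⟨hGood, hPair⟩ := comps_spec L hne
  have hflat : ((comps L).flatten).Pairwise Disjoint := by rw [flatten_comps]; exact hdisj
  rw [List.pairwise_flatten] at hflat
  obtain ⟨hin, hcross⟩ := hflat
  have hcross' : (comps L).Pairwise fun C D => Disjoint (lUnion C) (lUnion D) := by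
    refine hcross.imp ?_
    intro C D h
    rw [Finset.disjoint_left]
    intro a haC haD
    obtain ⟨B, hB, haB⟩ := mem_lUnion.mp haC
    obtain ⟨B', hB', haB'⟩ := mem_lUnion.mp haD
    exact Finset.disjoint_left.mp (h B hB B' hB') haB haB'
  refine ⟨?_, ?_, ?_, ?_⟩
  · intro M hM
    rw [List.mem_toFinset] at hM
    exact ⟨⟨(hGood M hM).2.1, hin M hM, rfl⟩, (hGood M hM).1⟩
  · intro M hM M' hM' hMne
    rw [Finset.mem_coe, List.mem_toFinset] at hM hM'
    haveI : Std.Symm (fun C D : List (Finset (Fin n)) => Disjoint (lUnion C) (lUnion D)) :=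
      ⟨fun _ _ h => h.symm⟩
    exact hcross'.forall hM hM' hMne
  · rw [sup_toFinset, flatten_comps]; exact hU
  · intro M hM
    rw [List.mem_toFinset] at hM
    obtain ⟨h1, h2, h3⟩ := hGood M hM
    exact std_of_good h1 h2 h3

/-- Surjectivity auxiliary, by strong induction. -/
theorem surj_aux (F : Finset (List (Finset (Fin n))))
    (hmem : ∀ M ∈ F, (∀ B ∈ M, B.Nonempty) ∧ M.Pairwise Disjoint ∧ M ≠ [] ∧
      ∃ b ∈ M.headD ∅, ∀ a ∈ lUnion M, b ≤ a)
    (hpw : (F : Set (List (Finset (Fin n)))).Pairwise fun M M' =>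
      Disjoint (lUnion M) (lUnion M')) :
    ∃ L, (∀ B ∈ L, B.Nonempty) ∧ L.Pairwise Disjoint ∧ lUnion L = F.sup lUnion ∧
      (comps L).toFinset = F := by
  induction F using Finset.strongInduction with
  | _ F ih =>
    rcases F.eq_empty_or_nonempty with rfl | hFne
    · exact ⟨[], by simp, by simp, by simp [lUnion_nil], by simp [comps]⟩
    obtain ⟨M, hM, hmax⟩ := F.exists_max_image key hFne
    have hss : F.erase M ⊂ F := Finset.erase_ssubset hM
    obtain ⟨L', h1, h2, h3, h4⟩ := ih (F.erase M) hss
      (fun M' hM' => hmem M' (Finset.mem_of_mem_erase hM'))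
      (hpw.mono (Finset.coe_subset.mpr (Finset.erase_subset _ _)))
    obtain ⟨hMne, hMdisj, hMnil, hMstd⟩ := hmem M hM
    have hdisjMF' : Disjoint (lUnion M) ((F.erase M).sup lUnion) := by
      rw [Finset.disjoint_sup_right]
      intro M' hM'
      exact hpw (Finset.mem_coe.mpr hM)
        (Finset.mem_coe.mpr (Finset.mem_of_mem_erase hM'))
        (Ne.symm (Finset.ne_of_mem_erase hM'))
    have hkeylt : ∀ C ∈ comps L', key C < (lUnion M).min := by
      intro C hC
      have hCF' : C ∈ F.erase M := by rw [← h4]; exact List.mem_toFinset.mpr hC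
      have hCF : C ∈ F := Finset.mem_of_mem_erase hCF'
      have hle : key C ≤ key M := hmax C hCF
      have hCne : C ≠ M := Finset.ne_of_mem_erase hCF'
      have hne' : key C ≠ key M := by
        intro he
        obtain ⟨hCblocks, _, hCnil, _⟩ := hmem C hCF
        have hCun : (lUnion C).Nonempty := lUnion_nonempty hCnil hCblocks
        set a := (lUnion C).min' hCun with ha
        have hamin : (↑a : WithTop (Fin n)) = (lUnion C).min := Finset.coe_min' hCun
        have haC : a ∈ lUnion C := Finset.min'_mem _ hCun
        have hkeyM : key M = (↑a : WithTop (Fin n)) := by rw [← he]; exact hamin.symm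
        have haM : a ∈ lUnion M := Finset.mem_of_min hkeyM
        exact Finset.disjoint_left.mp
          (hpw (Finset.mem_coe.mpr hCF) (Finset.mem_coe.mpr hM) hCne) haC haM
      exact lt_of_le_of_ne hle hne'
    have hcomps : comps (M ++ L') = M :: comps L' := by
      rw [comps_append M L' hkeylt, comps_std M hMnil hMne hMstd]
      rfl
    refine ⟨M ++ L', ?_, ?_, ?_, ?_⟩
    · intro B hB
      rcases List.mem_append.mp hB with hB | hB
      · exact hMne B hB
      · exact h1 B hB
    · rw [List.pairwise_append]
      refine ⟨hMdisj, h2, ?_⟩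
      intro B hB B' hB'
      exact hdisjMF'.mono (subset_lUnion hB) (h3 ▸ subset_lUnion hB')
    · rw [lUnion_append, h3]
      conv_rhs => rw [← Finset.insert_erase hM, Finset.sup_insert]
      rw [Finset.sup_eq_union]
    · rw [hcomps, List.toFinset_cons, h4, Finset.insert_erase hM]
end Aux

/-- For every `n ≥ 1` there is a bijection between the ordered set
partitions of `{1,…,n}` and the standard composite set partitions of `{1,…,n}`;
in particular these two finite sets have the same cardinality. -/
theorem statement_7 (n : ℕ) (hn : 1 ≤ n) :
    Nonempty ({L : List (Finset (Fin n)) // IsOSP Finset.univ L} ≃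
      {F : Finset (List (Finset (Fin n))) // IsStdCSP n F}) ∧
    Nat.card {L : List (Finset (Fin n)) // IsOSP Finset.univ L} =
      Nat.card {F : Finset (List (Finset (Fin n))) // IsStdCSP n F} := by
  haveI : IsAntisymm (List (Finset (Fin n)))
      (fun C D : List (Finset (Fin n)) => key D < key C) :=
    ⟨fun a b h h' => absurd h' (lt_asymm h)⟩
  have hinj : Function.Injective (fun L : {L : List (Finset (Fin n)) // IsOSP Finset.univ L} =>
      (⟨(comps L.1).toFinset, comps_isStdCSP L.1 L.2⟩ :
        {F : Finset (List (Finset (Fin n))) // IsStdCSP n F})) := by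
    rintro ⟨L, hL⟩ ⟨L', hL'⟩ h
    simp only [Subtype.mk.injEq] at h
    obtain ⟨_, hPair⟩ := comps_spec L hL.1
    obtain ⟨_, hPair'⟩ := comps_spec L' hL'.1
    have nd : (comps L).Nodup :=
      List.Pairwise.imp (fun {a b} h heq => by rw [heq] at h; exact lt_irrefl _ h) hPair
    have nd' : (comps L').Nodup :=
      List.Pairwise.imp (fun {a b} h heq => by rw [heq] at h; exact lt_irrefl _ h) hPair'
    have hperm := List.perm_of_nodup_nodup_toFinset_eq nd nd' h
    have heq : comps L = comps L' := List.Perm.eq_of_pairwise (fun a b _ _ h h' => absurd h' (lt_asymm h)) hPair hPair' hperm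
    have hLL : L = L' := by
      have := congrArg List.flatten heq
      rwa [flatten_comps, flatten_comps] at this
    exact Subtype.ext hLL
  have hsurj : Function.Surjective (fun L : {L : List (Finset (Fin n)) // IsOSP Finset.univ L} =>
      (⟨(comps L.1).toFinset, comps_isStdCSP L.1 L.2⟩ :
        {F : Finset (List (Finset (Fin n))) // IsStdCSP n F})) := by
    rintro ⟨F, hF⟩
    obtain ⟨hOSP, hpw, hsup, hstd⟩ := hF
    obtain ⟨L, h1, h2, h3, h4⟩ := surj_aux F
      (fun M hM => ⟨(hOSP M hM).1.1, (hOSP M hM).1.2.1, (hOSP M hM).2, hstd M hM⟩) hpw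
    exact ⟨⟨L, h1, h2, by rw [h3, hsup]⟩, Subtype.ext h4⟩
  have e := Equiv.ofBijective _ ⟨hinj, hsurj⟩
  exact ⟨⟨e⟩, Nat.card_congr e⟩

end PlatesPaper
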